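/- The rank of the walk matrix W_G = (j, A j, A² j, …, A^{n-1} j) of a graph G on n vertices equals the number of distinct main eigenvalues of G, where a main eigenvalue is an eigenvalue whose eigenspace is not orthogonal to the all-ones vector j. -/

import Mathlib

open Matrix Polynomial

/-- `μ` is a main eigenvalue of the matrix `A`: there is an eigenvector of `A`
for `μ` which is not orthogonal to the all-ones vector. -/
def Matrix.IsMainEig {n : ℕ} (A : Matrix (Fin n) (Fin n) ℝ) (μ : ℝ) : Prop :=
  ∃ v : Fin n → ℝ, A *ᵥ v = μ • v ∧ v ⬝ᵥ (fun _ => (1 : ℝ)) ≠ 0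

/-- The rank of the walk matrix `(j, Aj, A²j, …, A^{n-1}j)` of a graph `G` on `n`
vertices equals the number of distinct main eigenvalues of `G`. -/
theorem rank_walkMatrix_eq_card_mainEig {n : ℕ} (G : SimpleGraph (Fin n))
    [DecidableRel G.Adj] (A : Matrix (Fin n) (Fin n) ℝ) (hA : A = G.adjMatrix ℝ)
    (W : Matrix (Fin n) (Fin n) ℝ)
    (hW : ∀ a k, W a k = ((A ^ (k : ℕ)) *ᵥ (fun _ => (1 : ℝ))) a) :
    W.rank = {μ : ℝ | A.IsMainEig μ}.ncard := by
  classical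
  have hH : A.IsHermitian := by
    rw [hA]; ext i j
    simp [Matrix.conjTranspose_apply, SimpleGraph.adjMatrix_apply, SimpleGraph.adj_comm]
  set U : Matrix (Fin n) (Fin n) ℝ := (hH.eigenvectorUnitary : Matrix (Fin n) (Fin n) ℝ) with hUdef
  set lam : Fin n → ℝ := hH.eigenvalues with hlamdef
  have hspec : A = U * Matrix.diagonal lam * star U := by
    have := hH.spectral_theorem
    simpa [RCLike.ofReal_real_eq_id] using this
  have hU1 : star U * U = 1 := Unitary.coe_star_mul_self hH.eigenvectorUnitary
  have hU2 : U * star U = 1 := Unitary.coe_mul_star_self hH.eigenvectorUnitary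
  have hstar : star U = Uᵀ := rfl
  -- helper algebraic identities
  have key : ∀ X Y : Matrix (Fin n) (Fin n) ℝ,
      (U * X * star U) * (U * Y * star U) = U * (X * Y) * star U := by
    intro X Y
    rw [mul_assoc (U * X) (star U) (U * Y * star U), ← mul_assoc (star U) (U * Y) (star U),
      ← mul_assoc (star U) U Y, hU1, one_mul, ← mul_assoc (U * X) Y (star U), mul_assoc U X Y]
  have key2 : ∀ X : Matrix (Fin n) (Fin n) ℝ,
      star U * (U * X * star U) = X * star U := by
    intro X
    rw [← mul_assoc (star U) (U * X) (star U), ← mul_assoc (star U) U X, hU1, one_mul]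
  have key3 : ∀ X : Matrix (Fin n) (Fin n) ℝ,
      (U * X * star U) * U = U * X := by
    intro X
    rw [mul_assoc (U * X) (star U) U, hU1, mul_one]
  set ones : Fin n → ℝ := fun _ => (1 : ℝ) with hones
  set c : Fin n → ℝ := star U *ᵥ ones with hc
  -- powers of A
  have hAk : ∀ k : ℕ, A ^ k = U * Matrix.diagonal (fun a => lam a ^ k) * star U := by
    intro k
    induction k with
    | zero => simp [hU2]
    | succ k ih =>
      rw [pow_succ, ih, hspec, key, Matrix.diagonal_mul_diagonal]
      have hfun : (fun i => lam i ^ k * lam i) = fun i => lam i ^ (k + 1) := by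
        funext i; ring
      rw [hfun]
  -- the factored form of W
  set M : Matrix (Fin n) (Fin n) ℝ :=
    Matrix.of (fun a k => c a * lam a ^ (k : ℕ)) with hM
  have hWM : W = U * M := by
    ext a k
    rw [hW a k, hAk (k : ℕ), ← Matrix.mulVec_mulVec, ← Matrix.mulVec_mulVec]
    have hDc : Matrix.diagonal (fun b => lam b ^ (k : ℕ)) *ᵥ c
        = fun b => c b * lam b ^ (k : ℕ) := by
      funext b
      rw [Matrix.mulVec_diagonal]
      ring
    rw [hDc]
    simp only [Matrix.mulVec, Matrix.mul_apply, dotProduct, hM, Matrix.of_apply]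
  have hUisunit : IsUnit U.det := by
    apply IsUnit.of_mul_eq_one
    rw [← Matrix.det_mul, hU2, Matrix.det_one]
  have hrankWM : W.rank = M.rank := by
    rw [hWM, Matrix.rank_mul_eq_right_of_isUnit_det U M hUisunit]
  -- characterize main eigenvalues
  have hmain : {μ : ℝ | A.IsMainEig μ} = lam '' {a | c a ≠ 0} := by
    ext μ
    constructor
    · rintro ⟨v, hv, hvj⟩
      set d : Fin n → ℝ := star U *ᵥ v with hd
      have hvU : U *ᵥ d = v := by
        rw [hd, Matrix.mulVec_mulVec, hU2, Matrix.one_mulVec]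
      have hdiag : Matrix.diagonal lam *ᵥ d = μ • d := by
        have h1 : star U *ᵥ (A *ᵥ v) = Matrix.diagonal lam *ᵥ d := by
          rw [hspec, Matrix.mulVec_mulVec, key2, ← Matrix.mulVec_mulVec]
        have h2 : star U *ᵥ (μ • v) = μ • d := by
          rw [Matrix.mulVec_smul, hd]
        rw [← h1, hv, h2]
      have hsum : d ⬝ᵥ c = v ⬝ᵥ ones := by
        rw [hc, Matrix.dotProduct_mulVec, hstar, Matrix.vecMul_transpose, hvU]
      have hne : d ⬝ᵥ c ≠ 0 := by rw [hsum]; exact hvj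
      have : ∃ a, d a * c a ≠ 0 := by
        by_contra h
        push_neg at h
        apply hne
        simp only [dotProduct]
        exact Finset.sum_eq_zero fun a _ => h a
      obtain ⟨a, ha⟩ := this
      have hda : d a ≠ 0 := fun h => ha (by rw [h, zero_mul])
      have hca : c a ≠ 0 := fun h => ha (by rw [h, mul_zero])
      have hlam : lam a = μ := by
        have h3 := congrFun hdiag a
        rw [Matrix.mulVec_diagonal] at h3
        exact mul_right_cancel₀ hda h3
      exact ⟨a, hca, hlam⟩
    · rintro ⟨a, hca, rfl⟩
      refine ⟨fun i => U i a, ?_, ?_⟩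
      · have hv : (fun i => U i a) = U *ᵥ Pi.single a 1 := by
          funext i
          simp [Matrix.mulVec_single]
        rw [hv, hspec, Matrix.mulVec_mulVec, key3, ← Matrix.mulVec_mulVec,
          Matrix.diagonal_mulVec_single, ← Matrix.mulVec_smul]
        funext i
        simp [Matrix.mulVec, dotProduct, Pi.single_apply, mul_ite, mul_zero, mul_one,
          Finset.sum_ite_eq', mul_comm]
      · have hvones : (fun i => U i a) ⬝ᵥ ones = c a := by
          rw [hc]
          simp [dotProduct, Matrix.mulVec, hstar, Matrix.transpose_apply]
        rw [hvones]
        exact hca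
  -- finset versions
  set F : Finset (Fin n) := Finset.univ.filter (fun a => c a ≠ 0) with hF
  set img : Finset ℝ := F.image lam with himg
  set m : ℕ := img.card with hm
  have hncard : {μ : ℝ | A.IsMainEig μ}.ncard = m := by
    rw [hmain]
    rw [show lam '' {a | c a ≠ 0} = (img : Set ℝ) by
      rw [himg, Finset.coe_image, hF]
      ext a
      simp]
    exact Set.ncard_coe_finset img
  have hmn : m ≤ n := by
    calc m ≤ F.card := Finset.card_image_le
    _ ≤ Fintype.card (Fin n) := Finset.card_le_univ F
    _ = n := Fintype.card_fin n
  -- upper bound: M = P * Q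
  set P : Matrix (Fin n) img ℝ :=
    Matrix.of (fun a μ => if lam a = (μ : ℝ) then c a else 0) with hP
  set Q : Matrix img (Fin n) ℝ :=
    Matrix.of (fun μ k => (μ : ℝ) ^ (k : ℕ)) with hQ
  have hMPQ : M = P * Q := by
    ext a k
    rw [Matrix.mul_apply]
    have hterm : ∀ μ : img, P a μ * Q μ k
        = if (μ : ℝ) = lam a then c a * lam a ^ (k : ℕ) else 0 := by
      intro μ
      simp only [hP, hQ, Matrix.of_apply]
      by_cases h : lam a = (μ : ℝ)
      · rw [if_pos h, if_pos h.symm, h]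
      · rw [if_neg h, if_neg (fun hh => h hh.symm), zero_mul]
    rw [Finset.sum_congr rfl (fun μ _ => hterm μ)]
    rw [Finset.sum_coe_sort img (fun x => if x = lam a then c a * lam a ^ (k : ℕ) else 0),
      Finset.sum_ite_eq' img (lam a) (fun _ => c a * lam a ^ (k : ℕ))]
    by_cases h : lam a ∈ img
    · rw [if_pos h]; rfl
    · rw [if_neg h]
      have hca : c a = 0 := by
        by_contra hca
        exact h (Finset.mem_image_of_mem lam (by simp [hF, hca]))
      show c a * lam a ^ (k : ℕ) = 0
      rw [hca, zero_mul]
  have hub : M.rank ≤ m := by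
    rw [hMPQ]
    refine le_trans (Matrix.rank_mul_le_left P Q) ?_
    refine le_trans (Matrix.rank_le_card_width P) ?_
    simp [Fintype.card_coe, hm]
  -- lower bound
  have hex : ∀ μ : img, ∃ a, c a ≠ 0 ∧ lam a = (μ : ℝ) := by
    rintro ⟨μ, hμ⟩
    rw [himg, Finset.mem_image] at hμ
    obtain ⟨a, haF, ha⟩ := hμ
    rw [hF, Finset.mem_filter] at haF
    exact ⟨a, haF.2, ha⟩
  choose g hg1 hg2 using hex
  set e : img ≃ Fin m := img.equivFin with he
  set f : Fin m → Fin n := fun i => g (e.symm i) with hf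
  have hcf : ∀ i, c (f i) ≠ 0 := fun i => hg1 _
  have hlamf : ∀ i, lam (f i) = ((e.symm i : img) : ℝ) := fun i => hg2 _
  have hinj : Function.Injective (fun i => lam (f i)) := by
    intro i j hij
    simp only [hlamf] at hij
    exact e.symm.injective (Subtype.ext hij)
  set N : Matrix (Fin m) (Fin m) ℝ :=
    Matrix.of (fun i j => c (f i) * lam (f i) ^ (j : ℕ)) with hN
  have hNfact : N = Matrix.diagonal (fun i => c (f i))
      * Matrix.vandermonde (fun i => lam (f i)) := by
    ext i j
    rw [Matrix.diagonal_mul]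
    rfl
  have hNdet : N.det ≠ 0 := by
    rw [hNfact, Matrix.det_mul, Matrix.det_diagonal]
    refine mul_ne_zero ?_ ?_
    · exact Finset.prod_ne_zero_iff.mpr fun i _ => hcf i
    · exact Matrix.det_vandermonde_ne_zero_iff.mpr hinj
  have hNrank : N.rank = m := by
    rw [Matrix.rank_of_isUnit N (Matrix.isUnit_iff_isUnit_det N |>.mpr (isUnit_iff_ne_zero.mpr hNdet))]
    exact Fintype.card_fin m
  set L : Matrix (Fin m) (Fin n) ℝ :=
    Matrix.of (fun i a => if a = f i then (1 : ℝ) else 0) with hL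
  set R : Matrix (Fin n) (Fin m) ℝ :=
    Matrix.of (fun k j => if k = Fin.castLE hmn j then (1 : ℝ) else 0) with hR
  have hMR : ∀ a j, (M * R) a j = M a (Fin.castLE hmn j) := by
    intro a j
    rw [Matrix.mul_apply]
    simp only [hR, Matrix.of_apply, mul_ite, mul_one, mul_zero]
    rw [Finset.sum_ite_eq' Finset.univ (Fin.castLE hmn j) (fun k => M a k)]
    rw [if_pos (Finset.mem_univ _)]
  have hNLMR : N = L * (M * R) := by
    ext i j
    rw [Matrix.mul_apply]
    simp only [hL, Matrix.of_apply, ite_mul, one_mul, zero_mul]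
    rw [Finset.sum_ite_eq' Finset.univ (f i) (fun a => (M * R) a j),
      if_pos (Finset.mem_univ _), hMR]
    show c (f i) * lam (f i) ^ (j : ℕ)
      = c (f i) * lam (f i) ^ ((Fin.castLE hmn j : Fin n) : ℕ)
    rw [Fin.coe_castLE]
  have hlb : m ≤ M.rank := by
    calc m = N.rank := hNrank.symm
    _ ≤ (M * R).rank := by rw [hNLMR]; exact Matrix.rank_mul_le_right L (M * R)
    _ ≤ M.rank := Matrix.rank_mul_le_left M R
  rw [hrankWM, hncard]
  exact le_antisymm hub hlb
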